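/- If φ : Z_p → ℂ is continuous and there is a constant C ≥ 0 such that |φ(k) − φ(k + i p^n)| ≤ C p^{−n} for all n ≥ 0, all 0 ≤ k < p^n, and all 0 ≤ i ≤ p−1, then φ is Lipschitz with |φ(x) − φ(y)| ≤ (2C/(1 − p^{−1})) |x − y|_p for all x, y ∈ Z_p. -/

import Mathlib

/-- If `φ : ℤ_p → ℂ` is continuous and `|φ(k) - φ(k+ip^n)| ≤ C p^{-n}` for all `n ≥ 0`,
`0 ≤ k < p^n` and `0 ≤ i ≤ p-1`, then `φ` is Lipschitz with
`|φ(x) - φ(y)| ≤ (2C/(1-p⁻¹)) |x-y|_p`. -/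
theorem stmt19 (p : ℕ) [hp : Fact p.Prime] (φ : ℤ_[p] → ℂ) (hcont : Continuous φ)
    (C : ℝ) (hC : 0 ≤ C)
    (h : ∀ n k i : ℕ, k < p ^ n → i ≤ p - 1 →
      ‖φ ((k : ℤ_[p])) - φ (((k + i * p ^ n : ℕ) : ℤ_[p]))‖ ≤ C * (p : ℝ) ^ (-(n : ℤ))) :
    ∀ x y : ℤ_[p], ‖φ x - φ y‖ ≤ 2 * C / (1 - (p : ℝ)⁻¹) * ‖x - y‖ := by
  have hp2 : 2 ≤ p := hp.1.two_le
  have hp1 : (1:ℝ) < p := by exact_mod_cast hp.1.one_lt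
  have hp0 : (0:ℝ) < p := by linarith
  have hr0 : (0:ℝ) ≤ (p:ℝ)⁻¹ := by positivity
  have hr1 : (p:ℝ)⁻¹ < 1 := inv_lt_one_of_one_lt₀ hp1
  have hden : (0:ℝ) < 1 - (p:ℝ)⁻¹ := by linarith
  -- norm of z - appr z m
  have happr : ∀ (z : ℤ_[p]) (m : ℕ), ‖z - (z.appr m : ℤ_[p])‖ ≤ (p:ℝ) ^ (-(m:ℤ)) := by
    intro z m
    rw [PadicInt.norm_le_pow_iff_mem_span_pow]
    exact PadicInt.appr_spec m z
  -- single digit step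
  have step : ∀ (z : ℤ_[p]) (m : ℕ),
      ‖φ ((z.appr m : ℤ_[p])) - φ ((z.appr (m+1) : ℤ_[p]))‖ ≤ C * (p:ℝ) ^ (-(m:ℤ)) := by
    intro z m
    obtain ⟨c, hc⟩ := z.dvd_appr_sub_appr m (m+1) (Nat.le_succ m)
    have hmono : z.appr m ≤ z.appr (m+1) := z.appr_mono (Nat.le_succ m)
    have heq : z.appr (m+1) = z.appr m + c * p ^ m := by
      rw [mul_comm] at hc; omega
    have hlt : z.appr (m+1) < p ^ (m+1) := z.appr_lt (m+1)
    have hcp : c ≤ p - 1 := by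
      have h1 : c * p ^ m < p * p ^ m := by
        have : c * p ^ m ≤ z.appr (m+1) := by omega
        calc c * p ^ m ≤ z.appr (m+1) := this
          _ < p ^ (m+1) := hlt
          _ = p * p ^ m := by ring
      have hpm : 0 < p ^ m := Nat.pow_pos (by omega)
      have : c < p := by
        by_contra hcon
        push_neg at hcon
        exact absurd (Nat.mul_le_mul_right (p ^ m) hcon) (by omega)
      omega
    have := h m (z.appr m) c (z.appr_lt m) hcp
    rwa [← heq] at this
  -- key lemma: distance from z to its n-digit approximation
  have key : ∀ (z : ℤ_[p]) (n : ℕ),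
      ‖φ z - φ ((z.appr n : ℤ_[p]))‖ ≤ C * (p:ℝ) ^ (-(n:ℤ)) / (1 - (p:ℝ)⁻¹) := by
    intro z n
    have hrw : ∀ i : ℕ, (p:ℝ) ^ (-((n+i:ℕ):ℤ)) = (p:ℝ) ^ (-(n:ℤ)) * ((p:ℝ)⁻¹) ^ i := by
      intro i
      rw [show (-((n+i:ℕ):ℤ)) = -(n:ℤ) + (-(i:ℤ)) by push_cast; ring,
        zpow_add₀ (ne_of_gt hp0)]
      congr 1
      rw [zpow_neg, ← inv_zpow, zpow_natCast]
    have hsum : ∀ j : ℕ, ∑ i ∈ Finset.range j, (p:ℝ) ^ (-((n+i:ℕ):ℤ))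
        ≤ (p:ℝ) ^ (-(n:ℤ)) / (1 - (p:ℝ)⁻¹) := by
      intro j
      have hgs : ∑ i ∈ Finset.range j, ((p:ℝ)⁻¹) ^ i ≤ (1 - (p:ℝ)⁻¹)⁻¹ :=
        sum_le_hasSum _ (fun i _ => by positivity) (hasSum_geometric_of_lt_one hr0 hr1)
      calc ∑ i ∈ Finset.range j, (p:ℝ) ^ (-((n+i:ℕ):ℤ))
          = (p:ℝ) ^ (-(n:ℤ)) * ∑ i ∈ Finset.range j, ((p:ℝ)⁻¹) ^ i := by
            rw [Finset.mul_sum]; exact Finset.sum_congr rfl (fun i _ => hrw i)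
        _ ≤ (p:ℝ) ^ (-(n:ℤ)) * (1 - (p:ℝ)⁻¹)⁻¹ := by
            apply mul_le_mul_of_nonneg_left hgs (by positivity)
        _ = (p:ℝ) ^ (-(n:ℤ)) / (1 - (p:ℝ)⁻¹) := by rw [div_eq_mul_inv]
    have hbound : ∀ j : ℕ, ‖φ ((z.appr n : ℤ_[p])) - φ ((z.appr (n + j) : ℤ_[p]))‖
        ≤ C * ∑ i ∈ Finset.range j, (p:ℝ) ^ (-((n+i:ℕ):ℤ)) := by
      intro j
      induction j with
      | zero => simp
      | succ j ih =>
        calc ‖φ ((z.appr n : ℤ_[p])) - φ ((z.appr (n + (j+1)) : ℤ_[p]))‖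
            ≤ ‖φ ((z.appr n : ℤ_[p])) - φ ((z.appr (n + j) : ℤ_[p]))‖
              + ‖φ ((z.appr (n + j) : ℤ_[p])) - φ ((z.appr ((n + j) + 1) : ℤ_[p]))‖ := by
                have := norm_sub_le_norm_sub_add_norm_sub
                  (φ ((z.appr n : ℤ_[p]))) (φ ((z.appr (n + j) : ℤ_[p])))
                  (φ ((z.appr ((n + j) + 1) : ℤ_[p])))
                simpa [show n + (j+1) = (n + j) + 1 by ring] using this
          _ ≤ C * ∑ i ∈ Finset.range j, (p:ℝ) ^ (-((n+i:ℕ):ℤ)) + C * (p:ℝ) ^ (-((n+j:ℕ):ℤ)) := by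
                gcongr
                · exact step z (n + j)
          _ = C * ∑ i ∈ Finset.range (j+1), (p:ℝ) ^ (-((n+i:ℕ):ℤ)) := by
                rw [Finset.sum_range_succ, mul_add]
    have hbound' : ∀ j : ℕ, ‖φ ((z.appr n : ℤ_[p])) - φ ((z.appr (n + j) : ℤ_[p]))‖
        ≤ C * (p:ℝ) ^ (-(n:ℤ)) / (1 - (p:ℝ)⁻¹) := by
      intro j
      calc ‖φ ((z.appr n : ℤ_[p])) - φ ((z.appr (n + j) : ℤ_[p]))‖
          ≤ C * ∑ i ∈ Finset.range j, (p:ℝ) ^ (-((n+i:ℕ):ℤ)) := hbound j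
        _ ≤ C * ((p:ℝ) ^ (-(n:ℤ)) / (1 - (p:ℝ)⁻¹)) := by
            exact mul_le_mul_of_nonneg_left (hsum j) hC
        _ = C * (p:ℝ) ^ (-(n:ℤ)) / (1 - (p:ℝ)⁻¹) := by ring
    -- take the limit j → ∞
    have htends : Filter.Tendsto (fun j : ℕ => ((z.appr (n + j) : ℤ_[p]))) Filter.atTop (nhds z) := by
      rw [tendsto_iff_norm_sub_tendsto_zero]
      have hle : ∀ j : ℕ, ‖(z.appr (n + j) : ℤ_[p]) - z‖ ≤ (p:ℝ) ^ (-((n+(j:ℕ):ℕ):ℤ)) := fun j => by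
        rw [norm_sub_rev]; exact happr z (n + j)
      have hg : Filter.Tendsto (fun j : ℕ => (p:ℝ) ^ (-((n+j:ℕ):ℤ))) Filter.atTop (nhds 0) := by
        have h2 : Filter.Tendsto (fun j : ℕ => ((p:ℝ)⁻¹) ^ j) Filter.atTop (nhds 0) :=
          tendsto_pow_atTop_nhds_zero_of_lt_one hr0 hr1
        have h3 : Filter.Tendsto (fun j : ℕ => (p:ℝ) ^ (-(n:ℤ)) * ((p:ℝ)⁻¹) ^ j)
            Filter.atTop (nhds ((p:ℝ) ^ (-(n:ℤ)) * 0)) := h2.const_mul _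
        rw [mul_zero] at h3
        apply h3.congr
        intro j
        exact (hrw j).symm
      exact squeeze_zero (fun j => norm_nonneg _) hle hg
    have hlim : Filter.Tendsto
        (fun j : ℕ => ‖φ ((z.appr n : ℤ_[p])) - φ ((z.appr (n + j) : ℤ_[p]))‖)
        Filter.atTop (nhds ‖φ ((z.appr n : ℤ_[p])) - φ z‖) :=
      ((((hcont.tendsto z).comp htends).const_sub _).norm)
    have := le_of_tendsto hlim (Filter.Eventually.of_forall hbound')
    rwa [norm_sub_rev] at this
  -- main argument
  intro x y
  by_cases hxy : x = y
  · subst hxy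
    simp only [sub_self, norm_zero, mul_zero]
    simp
  · have hne : x - y ≠ 0 := sub_ne_zero.mpr hxy
    set n : ℕ := (x - y).valuation with hn
    have hval : ((n:ℤ)) = (x - y).valuation := rfl
    have hnorm : ‖x - y‖ = (p:ℝ) ^ (-(n:ℤ)) := by
      rw [PadicInt.norm_eq_zpow_neg_valuation hne, hval]
    -- appr x n = appr y n
    have hxy_span : x - y ∈ (Ideal.span {(p : ℤ_[p]) ^ n} : Ideal ℤ_[p]) := by
      rw [← PadicInt.norm_le_pow_iff_mem_span_pow]
      rw [hnorm]
    have hax := PadicInt.appr_spec n x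
    have hay := PadicInt.appr_spec n y
    have hdvd : ((((x.appr n : ℤ) - (y.appr n : ℤ)) : ℤ) : ℤ_[p]) ∈
        (Ideal.span {(p : ℤ_[p]) ^ n} : Ideal ℤ_[p]) := by
      have : ((x.appr n : ℤ_[p]) - (y.appr n : ℤ_[p])) =
          (y - (y.appr n : ℤ_[p])) - (x - (x.appr n : ℤ_[p])) + (x - y) := by ring
      push_cast
      rw [this]
      exact Ideal.add_mem _ (Ideal.sub_mem _ hay hax) hxy_span
    have happr_eq : x.appr n = y.appr n := by
      rw [Ideal.mem_span_singleton] at hdvd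
      rw [PadicInt.pow_p_dvd_int_iff] at hdvd
      have h1 : ((x.appr n : ℕ) : ℤ) < (p:ℤ) ^ n := by exact_mod_cast x.appr_lt n
      have h2 : ((y.appr n : ℕ) : ℤ) < (p:ℤ) ^ n := by exact_mod_cast y.appr_lt n
      have h3 : (0:ℤ) ≤ ((x.appr n : ℕ) : ℤ) := Int.ofNat_nonneg _
      have h4 : (0:ℤ) ≤ ((y.appr n : ℕ) : ℤ) := Int.ofNat_nonneg _
      have := Int.eq_zero_of_abs_lt_dvd hdvd (by rw [abs_lt]; constructor <;> linarith)
      omega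
    calc ‖φ x - φ y‖
        ≤ ‖φ x - φ ((x.appr n : ℤ_[p]))‖ + ‖φ ((y.appr n : ℤ_[p])) - φ y‖ := by
          rw [happr_eq]
          exact norm_sub_le_norm_sub_add_norm_sub _ _ _
      _ ≤ C * (p:ℝ) ^ (-(n:ℤ)) / (1 - (p:ℝ)⁻¹) + C * (p:ℝ) ^ (-(n:ℤ)) / (1 - (p:ℝ)⁻¹) := by
          gcongr
          · exact key x n
          · rw [norm_sub_rev]; exact key y n
      _ = 2 * C / (1 - (p:ℝ)⁻¹) * ‖x - y‖ := by
          rw [hnorm]; ring
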